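/- The Snapshot arrangement follows an ECM distribution: the joint distribution of the arrangement ( (Q_{k,1}, …, Q_{k,m_k}, R_k) )_{k=1,…,n} coincides with the distribution of the counts of N i.i.d. categorical paths on ∏_{k=1}^n {1, …, m_k + 1} whose full path probabilities are π_{l_1,…,l_n} = ∫_{(ℝ^d)^n} ∏_{k=1}^n w_k(x) dν(x), where w_k(x) = p · 1{ x(k) ∈ A_{k,l_k} } when l_k ≤ m_k, and w_k(x) = 1 − p · 1{ x(k) ∈ A_{k,1} ∪ ⋯ ∪ A_{k,m_k} } when l_k = m_k + 1. -/

import Mathlib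

open MeasureTheory ProbabilityTheory

section SnapAux

variable {d n : ℕ} {m : Fin n → ℕ}

open Classical in
/-- The category of a point at time `k`, given detection flag `bb`. -/
noncomputable def snapCatK (A : Π k : Fin n, Fin (m k) → Set (Fin d → ℝ)) (k : Fin n)
    (bb : Bool) (w : Fin d → ℝ) : Fin (m k + 1) :=
  if h : bb = true ∧ ∃ l, w ∈ A k l then (Classical.choose h.2).castSucc else Fin.last (m k)

/-- The categorical path of an individual. -/
noncomputable def snapCat (A : Π k : Fin n, Fin (m k) → Set (Fin d → ℝ))
    (b : Fin n → Bool) (z : Fin n → Fin d → ℝ) : Π k : Fin n, Fin (m k + 1) :=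
  fun k => snapCatK A k (b k) (z k)

lemma fin_eq_last_of_not_lt {k : ℕ} {v : Fin (k + 1)} (h : ¬ (v : ℕ) < k) :
    v = Fin.last k := by
  ext
  have := v.isLt
  simp only [Fin.val_last]
  omega

lemma snapCatK_eq_iff_of_lt {A : Π k : Fin n, Fin (m k) → Set (Fin d → ℝ)}
    (hAdisj : ∀ k, Pairwise (Function.onFun Disjoint (A k)))
    {k : Fin n} {bb : Bool} {w : Fin d → ℝ} {v : Fin (m k + 1)} (hv : (v : ℕ) < m k) :
    snapCatK A k bb w = v ↔ (bb = true ∧ w ∈ A k ⟨(v : ℕ), hv⟩) := by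
  unfold snapCatK
  split_ifs with hc
  · constructor
    · intro h
      refine ⟨hc.1, ?_⟩
      have hval : ((Classical.choose hc.2 : Fin (m k)) : ℕ) = (v : ℕ) := by
        have := congrArg Fin.val h
        simpa using this
      have hl : Classical.choose hc.2 = ⟨(v : ℕ), hv⟩ := Fin.val_injective hval
      exact hl ▸ Classical.choose_spec hc.2
    · rintro ⟨hb, hw⟩
      have hl : Classical.choose hc.2 = ⟨(v : ℕ), hv⟩ := by
        by_contra hne
        exact (Set.disjoint_left.mp (hAdisj k hne)) (Classical.choose_spec hc.2) hw
      rw [hl]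
      exact Fin.val_injective rfl
  · constructor
    · intro h
      have := congrArg Fin.val h
      simp only [Fin.val_last] at this
      omega
    · rintro ⟨hb, hw⟩
      exact absurd ⟨hb, ⟨_, hw⟩⟩ hc

lemma snapCatK_eq_iff_of_not_lt {A : Π k : Fin n, Fin (m k) → Set (Fin d → ℝ)}
    {k : Fin n} {bb : Bool} {w : Fin d → ℝ} {v : Fin (m k + 1)} (hv : ¬ (v : ℕ) < m k) :
    snapCatK A k bb w = v ↔ ¬(bb = true ∧ ∃ l, w ∈ A k l) := by
  rw [fin_eq_last_of_not_lt hv]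
  unfold snapCatK
  split_ifs with hc
  · exact ⟨fun h => absurd h (Fin.castSucc_lt_last _).ne, fun h => absurd hc h⟩
  · simp [hc]

/-- Measurability of the category map composed with measurable data. -/
lemma measurable_snapCat_comp {Ω : Type*} [MeasurableSpace Ω]
    {A : Π k : Fin n, Fin (m k) → Set (Fin d → ℝ)}
    (hAmeas : ∀ k l, MeasurableSet (A k l))
    (hAdisj : ∀ k, Pairwise (Function.onFun Disjoint (A k)))
    {ζ : Ω → Fin n → Fin d → ℝ} (hζ : Measurable ζ)
    {δ : Fin n → Ω → Bool} (hδ : ∀ k, Measurable (δ k)) :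
    Measurable (fun ω => snapCat A (fun k => δ k ω) (ζ ω)) := by
  apply measurable_pi_lambda
  intro k
  apply measurable_to_countable'
  intro v
  by_cases hv : (v : ℕ) < m k
  · have hset : (fun ω => snapCat A (fun k' => δ k' ω) (ζ ω) k) ⁻¹' {v}
        = (δ k ⁻¹' {true}) ∩ ((fun ω => ζ ω k) ⁻¹' A k ⟨(v : ℕ), hv⟩) := by
      ext ω
      simp only [Set.mem_preimage, Set.mem_singleton_iff, Set.mem_inter_iff]
      exact snapCatK_eq_iff_of_lt hAdisj hv
    rw [hset]
    exact ((hδ k) (measurableSet_singleton true)).inter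
      ((hζ.eval (a := k)) (hAmeas k _))
  · have hset : (fun ω => snapCat A (fun k' => δ k' ω) (ζ ω) k) ⁻¹' {v}
        = ((δ k ⁻¹' {true}) ∩ (⋃ l, (fun ω => ζ ω k) ⁻¹' A k l))ᶜ := by
      ext ω
      simp only [Set.mem_preimage, Set.mem_singleton_iff, Set.mem_compl_iff,
        Set.mem_inter_iff, Set.mem_iUnion]
      exact snapCatK_eq_iff_of_not_lt hv
    rw [hset]
    exact (((hδ k) (measurableSet_singleton true)).inter
      (MeasurableSet.iUnion fun l => (hζ.eval (a := k)) (hAmeas k l))).compl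

end SnapAux

theorem snapshot_is_ecm
    {Ω : Type*} [MeasurableSpace Ω] (P : Measure Ω) [IsProbabilityMeasure P]
    {d N n : ℕ} (hd : 1 ≤ d) (hN : 1 ≤ N) (hn : 1 ≤ n)
    (t : Fin n → ℝ) (ht : StrictMono t)
    (Z : Fin N → Ω → (Fin n → (Fin d → ℝ)))
    (hZmeas : ∀ j, Measurable (Z j))
    (ν : Measure (Fin n → (Fin d → ℝ)))
    (hlaw : ∀ j, Measure.map (Z j) P = ν)
    (hZindep : iIndepFun Z P)
    {m : Fin n → ℕ}
    (A : Π k : Fin n, Fin (m k) → Set (Fin d → ℝ))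
    (hAmeas : ∀ k l, MeasurableSet (A k l))
    (hAdisj : ∀ k, Pairwise (Function.onFun Disjoint (A k)))
    (p : ℝ) (hp0 : 0 ≤ p) (hp1 : p ≤ 1)
    (D : Fin N → Fin n → Ω → Bool)
    (hDmeas : ∀ j k, Measurable (D j k))
    (hDp : ∀ j k, P {ω | D j k ω = true} = ENNReal.ofReal p)
    (hDindep : iIndepFun
        (fun jk : Fin N × Fin n => D jk.1 jk.2) P)
    (hZD : IndepFun (fun ω (j : Fin N) => Z j ω)
        (fun ω (jk : Fin N × Fin n) => D jk.1 jk.2 ω) P)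
    (μπ : Measure (Π k : Fin n, Fin (m k + 1))) [IsProbabilityMeasure μπ]
    (hπ : ∀ x : Π k : Fin n, Fin (m k + 1),
      (μπ {x}).toReal
        = ∫ y, (∏ k : Fin n,
            if h : (x k : ℕ) < m k
              then (A k ⟨(x k : ℕ), h⟩).indicator (fun _ => p) (y k)
              else 1 - (⋃ l' : Fin (m k), A k l').indicator (fun _ => p) (y k)) ∂ν) :
    Measure.map
      (fun ω => fun (k : Fin n) (l : Fin (m k + 1)) =>
        if h : (l : ℕ) < m k
          then Nat.card {j : Fin N // Z j ω k ∈ A k ⟨(l : ℕ), h⟩ ∧ D j k ω = true}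
          else N - ∑ l' : Fin (m k),
            Nat.card {j : Fin N // Z j ω k ∈ A k l' ∧ D j k ω = true}) P
    = Measure.map
      (fun (ω' : Fin N → Π k : Fin n, Fin (m k + 1)) =>
        fun (k : Fin n) (l : Fin (m k + 1)) => Nat.card {j : Fin N // ω' j k = l})
      (Measure.pi fun _ : Fin N => μπ) := by
  classical
  haveI hν : IsProbabilityMeasure ν := by
    rw [← hlaw ⟨0, hN⟩]
    exact Measure.isProbabilityMeasure_map (hZmeas _).aemeasurable
  -- the categorical path process
  set F : Ω → Fin N → Π k : Fin n, Fin (m k + 1) :=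
    fun ω j => snapCat A (fun k => D j k ω) (Z j ω) with hF_def
  have hFmeas : Measurable F := measurable_pi_lambda _ fun j =>
    measurable_snapCat_comp hAmeas hAdisj (hZmeas j) (fun k => hDmeas j k)
  have hcntmeas : Measurable
      (fun (ω' : Fin N → Π k : Fin n, Fin (m k + 1)) =>
        fun (k : Fin n) (l : Fin (m k + 1)) => Nat.card {j : Fin N // ω' j k = l}) := by
    apply measurable_to_countable'
    intro x
    exact (Set.toFinite _).measurableSet
  -- Step 1: the snapshot counts are the counts of the categorical paths
  have hfun : (fun ω => fun (k : Fin n) (l : Fin (m k + 1)) =>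
        if h : (l : ℕ) < m k
          then Nat.card {j : Fin N // Z j ω k ∈ A k ⟨(l : ℕ), h⟩ ∧ D j k ω = true}
          else N - ∑ l' : Fin (m k),
            Nat.card {j : Fin N // Z j ω k ∈ A k l' ∧ D j k ω = true})
      = (fun (ω' : Fin N → Π k : Fin n, Fin (m k + 1)) =>
        fun (k : Fin n) (l : Fin (m k + 1)) => Nat.card {j : Fin N // ω' j k = l}) ∘ F := by
    funext ω
    funext k
    funext l
    simp only [Function.comp_apply]
    have hFev : ∀ (j : Fin N) (v : Fin (m k + 1)) (hv : (v : ℕ) < m k),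
        (F ω j k = v) ↔ (Z j ω k ∈ A k ⟨(v : ℕ), hv⟩ ∧ D j k ω = true) := by
      intro j v hv
      rw [show F ω j k = snapCatK A k (D j k ω) (Z j ω k) from rfl,
        snapCatK_eq_iff_of_lt hAdisj hv]
      exact and_comm
    by_cases h : (l : ℕ) < m k
    · rw [dif_pos h]
      exact Nat.card_congr (Equiv.subtypeEquivRight fun j => (hFev j l h).symm)
    · rw [dif_neg h]
      have hcount : ∀ v : Fin (m k + 1), Nat.card {j : Fin N // F ω j k = v}
          = (Finset.univ.filter (fun j : Fin N => F ω j k = v)).card := by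
        intro v
        rw [Nat.card_eq_fintype_card, Fintype.card_subtype]
      have hterm : ∀ l' : Fin (m k),
          Nat.card {j : Fin N // Z j ω k ∈ A k l' ∧ D j k ω = true}
          = (Finset.univ.filter
              (fun j : Fin N => F ω j k = Fin.castSucc l')).card := by
        intro l'
        have hlt : ((Fin.castSucc l' : Fin (m k + 1)) : ℕ) < m k := by
          simpa using l'.isLt
        have hl' : (⟨((Fin.castSucc l' : Fin (m k + 1)) : ℕ), hlt⟩ : Fin (m k)) = l' :=
          Fin.val_injective (by simp)
        rw [← hcount]
        refine Nat.card_congr (Equiv.subtypeEquivRight fun j => ?_)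
        rw [hFev j (Fin.castSucc l') hlt, hl']
      have hNsum : N = ∑ v : Fin (m k + 1),
          (Finset.univ.filter (fun j : Fin N => F ω j k = v)).card := by
        have := Finset.card_eq_sum_card_fiberwise
          (f := fun j : Fin N => F ω j k) (s := Finset.univ) (t := Finset.univ)
          (fun j _ => Finset.mem_univ _)
        simpa using this
      rw [Fin.sum_univ_castSucc] at hNsum
      have hsum : (∑ l' : Fin (m k),
          Nat.card {j : Fin N // Z j ω k ∈ A k l' ∧ D j k ω = true})
          = ∑ l' : Fin (m k), (Finset.univ.filter
              (fun j : Fin N => F ω j k = Fin.castSucc l')).card :=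
        Finset.sum_congr rfl fun l' _ => hterm l'
      have hl : l = Fin.last (m k) := fin_eq_last_of_not_lt h
      rw [hl, hcount (Fin.last (m k)), hsum]
      omega
  -- Step 2: the law of the categorical path process is the product law
  have hmain : Measure.map F P = Measure.pi (fun _ : Fin N => μπ) := by
    -- per-individual per-pattern path sets
    set S : (Π k : Fin n, Fin (m k + 1)) → (Fin n → Bool) → Set (Fin n → Fin d → ℝ) :=
      fun x b => (fun z => snapCat A b z) ⁻¹' {x} with hS_def
    have hSmeas : ∀ x b, MeasurableSet (S x b) := by
      intro x b
      have : Measurable (fun z : Fin n → Fin d → ℝ => snapCat A b z) :=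
        measurable_snapCat_comp (ζ := fun z => z) (δ := fun k _ => b k)
          hAmeas hAdisj measurable_id (fun k => measurable_const)
      exact this (measurableSet_singleton x)
    -- detection probabilities
    set q : Bool → ENNReal :=
      fun bb => if bb then ENNReal.ofReal p else ENNReal.ofReal (1 - p) with hq_def
    have hqprob : ∀ j k (bb : Bool), P (D j k ⁻¹' {bb}) = q bb := by
      intro j k bb
      cases bb
      · have hc : D j k ⁻¹' {false} = {ω | D j k ω = true}ᶜ := by
          ext ω; simp
        rw [hc, measure_compl (show MeasurableSet {ω | D j k ω = true} from
            (hDmeas j k) (measurableSet_singleton true))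
            (measure_ne_top _ _), hDp j k, measure_univ]
        simp only [hq_def, if_neg Bool.false_ne_true]
        rw [ENNReal.ofReal_sub 1 hp0, ENNReal.ofReal_one]
      · rw [show D j k ⁻¹' {true} = {ω | D j k ω = true} from rfl, hDp j k]
        simp [hq_def]
    -- the key single-individual identity
    have hkey : ∀ x : Π k : Fin n, Fin (m k + 1),
        μπ {x} = ∑ b : Fin n → Bool, ν (S x b) * ∏ k, q (b k) := by
      intro x
      set qr : Bool → ℝ := fun bb => if bb then p else 1 - p with hqr_def
      have hqr0 : ∀ bb, 0 ≤ qr bb := by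
        intro bb; cases bb <;> simp [hqr_def] <;> linarith
      have hq_eq : ∀ bb, q bb = ENNReal.ofReal (qr bb) := by
        intro bb; cases bb <;> simp [hq_def, hqr_def]
      have hterm_ne : ∀ b : Fin n → Bool, ν (S x b) * ∏ k, q (b k) ≠ ⊤ := by
        intro b
        refine ENNReal.mul_ne_top (measure_ne_top _ _)
          (ENNReal.prod_lt_top fun k _ => ?_).ne
        rw [hq_eq]
        exact ENNReal.ofReal_lt_top
      have hRHS_ne : (∑ b : Fin n → Bool, ν (S x b) * ∏ k, q (b k)) ≠ ⊤ :=
        (ENNReal.sum_lt_top.mpr fun b _ => (hterm_ne b).lt_top).ne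
      refine (ENNReal.toReal_eq_toReal_iff' (measure_ne_top _ _) hRHS_ne).mp ?_
      rw [hπ x, ENNReal.toReal_sum (fun b _ => hterm_ne b)]
      -- per-time per-flag detection sets
      set V : Π k : Fin n, Bool → Set (Fin d → ℝ) :=
        fun k bb => {w | snapCatK A k bb w = x k} with hV_def
      have hmemS : ∀ (b : Fin n → Bool) (y : Fin n → Fin d → ℝ),
          y ∈ S x b ↔ ∀ k, y k ∈ V k (b k) := by
        intro b y
        constructor
        · intro hy k
          exact congrFun (show snapCat A b y = x from hy) k
        · intro hy
          show snapCat A b y = x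
          funext k
          exact hy k
      -- pointwise identity for the integrand
      have hptw : ∀ y : Fin n → Fin d → ℝ,
          (∏ k : Fin n,
            if h : (x k : ℕ) < m k
              then (A k ⟨(x k : ℕ), h⟩).indicator (fun _ => p) (y k)
              else 1 - (⋃ l' : Fin (m k), A k l').indicator (fun _ => p) (y k))
          = ∑ b : Fin n → Bool,
              (S x b).indicator (fun _ => ∏ k, qr (b k)) y := by
        intro y
        have hcoord : ∀ k : Fin n,
            (if h : (x k : ℕ) < m k
              then (A k ⟨(x k : ℕ), h⟩).indicator (fun _ => p) (y k)
              else 1 - (⋃ l' : Fin (m k), A k l').indicator (fun _ => p) (y k))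
            = ∑ bb : Bool, qr bb * (V k bb).indicator (fun _ => (1:ℝ)) (y k) := by
          intro k
          rw [Fintype.sum_bool]
          by_cases hx : (x k : ℕ) < m k
          · rw [dif_pos hx]
            have hVt : V k true = A k ⟨(x k : ℕ), hx⟩ := by
              ext w
              simp [hV_def, snapCatK_eq_iff_of_lt hAdisj hx]
            have hVf : V k false = ∅ := by
              ext w
              simp [hV_def, snapCatK_eq_iff_of_lt hAdisj hx]
            rw [hVt, hVf]
            by_cases hw : y k ∈ A k ⟨(x k : ℕ), hx⟩ <;>
              simp [Set.indicator_of_mem, Set.indicator_of_notMem, hw, hqr_def]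
          · rw [dif_neg hx]
            have hVt : V k true = (⋃ l' : Fin (m k), A k l')ᶜ := by
              ext w
              simp [hV_def, snapCatK_eq_iff_of_not_lt hx]
            have hVf : V k false = Set.univ := by
              ext w
              simp [hV_def, snapCatK_eq_iff_of_not_lt hx]
            rw [hVt, hVf]
            by_cases hw : y k ∈ ⋃ l' : Fin (m k), A k l'
            · rw [Set.indicator_of_mem hw,
                Set.indicator_of_notMem
                  (show y k ∉ (⋃ l' : Fin (m k), A k l')ᶜ from by simpa using hw),
                Set.indicator_of_mem (Set.mem_univ (y k))]
              simp only [hqr_def]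
              norm_num
            · rw [Set.indicator_of_notMem hw,
                Set.indicator_of_mem
                  (show y k ∈ (⋃ l' : Fin (m k), A k l')ᶜ from by simpa using hw),
                Set.indicator_of_mem (Set.mem_univ (y k))]
              simp only [hqr_def]
              norm_num
        rw [Finset.prod_congr rfl fun k _ => hcoord k,
          Fintype.prod_sum (κ := fun _ : Fin n => Bool)
            (f := fun k bb => qr bb * (V k bb).indicator (fun _ => (1:ℝ)) (y k))]
        refine Finset.sum_congr rfl fun b _ => ?_
        by_cases hy : y ∈ S x b
        · rw [Set.indicator_of_mem hy]
          refine Finset.prod_congr rfl fun k _ => ?_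
          rw [Set.indicator_of_mem ((hmemS b y).mp hy k), mul_one]
        · rw [Set.indicator_of_notMem hy]
          have hex : ∃ k, y k ∉ V k (b k) := by
            by_contra hall
            push_neg at hall
            exact hy ((hmemS b y).mpr hall)
          obtain ⟨k₀, hk₀⟩ := hex
          exact Finset.prod_eq_zero (Finset.mem_univ k₀)
            (by rw [Set.indicator_of_notMem hk₀, mul_zero])
      rw [integral_congr_ae (Filter.Eventually.of_forall hptw),
        integral_finset_sum _ (fun b _ => (integrable_const _).indicator (hSmeas x b))]
      refine Finset.sum_congr rfl fun b _ => ?_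
      rw [integral_indicator_const _ (hSmeas x b), smul_eq_mul,
        ENNReal.toReal_mul, ENNReal.toReal_prod]
      congr 1
      exact Finset.prod_congr rfl fun k _ => by
        rw [hq_eq, ENNReal.toReal_ofReal (hqr0 _)]
    apply Measure.ext_of_singleton
    intro x
    rw [Measure.map_apply hFmeas (measurableSet_singleton x)]
    have hxpi : ({x} : Set (Fin N → Π k : Fin n, Fin (m k + 1)))
        = Set.univ.pi (fun j => {x j}) := by
      ext y; simp [Set.mem_pi, funext_iff]
    have hpix : (Measure.pi fun _ : Fin N => μπ) {x} = ∏ j, μπ {x j} := by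
      rw [hxpi, Measure.pi_pi]
    rw [hpix]
    -- partition according to the detection pattern
    set G : Ω → (Fin N → Fin n → Bool) := fun ω j k => D j k ω with hG_def
    have hGmeas : Measurable G :=
      measurable_pi_lambda _ fun j => measurable_pi_lambda _ fun k => hDmeas j k
    have hpart : F ⁻¹' {x} = ⋃ β ∈ (Finset.univ : Finset (Fin N → Fin n → Bool)),
        (F ⁻¹' {x} ∩ G ⁻¹' {β}) := by
      ext ω
      simp only [Set.mem_iUnion, Finset.mem_univ, Set.mem_inter_iff, exists_prop,
        true_and, Set.mem_preimage, Set.mem_singleton_iff]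
      exact ⟨fun h => ⟨G ω, h, rfl⟩, fun ⟨β, h, _⟩ => h⟩
    have hdisjβ : Set.PairwiseDisjoint
        ((Finset.univ : Finset (Fin N → Fin n → Bool)) : Set (Fin N → Fin n → Bool))
        (fun β => F ⁻¹' {x} ∩ G ⁻¹' {β}) := by
      intro β _ β' _ hne
      rw [Function.onFun]
      refine Set.disjoint_left.mpr ?_
      rintro ω ⟨_, h1⟩ ⟨_, h2⟩
      simp only [Set.mem_preimage, Set.mem_singleton_iff] at h1 h2
      exact hne (h1 ▸ h2 ▸ rfl)
    rw [hpart, measure_biUnion_finset hdisjβ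
      (fun β _ => (hFmeas (measurableSet_singleton x)).inter
        (hGmeas (measurableSet_singleton β)))]
    -- compute each term by independence
    have hβterm : ∀ β : Fin N → Fin n → Bool,
        P (F ⁻¹' {x} ∩ G ⁻¹' {β})
          = ∏ j, (ν (S (x j) (β j)) * ∏ k, q (β j k)) := by
      intro β
      have hset : F ⁻¹' {x} ∩ G ⁻¹' {β}
          = ((fun ω (j : Fin N) => Z j ω) ⁻¹' Set.univ.pi (fun j => S (x j) (β j)))
            ∩ ((fun ω (jk : Fin N × Fin n) => D jk.1 jk.2 ω) ⁻¹'
                {fun jk => β jk.1 jk.2}) := by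
        ext ω
        constructor
        · intro hω
          have hFx : F ω = x := hω.1
          have hGβ : G ω = β := hω.2
          refine ⟨fun j _ => ?_, ?_⟩
          · show snapCat A (β j) (Z j ω) = x j
            rw [show β j = fun k => D j k ω from (congrFun hGβ j).symm]
            exact congrFun hFx j
          · show (fun jk : Fin N × Fin n => D jk.1 jk.2 ω) ∈
              ({fun jk : Fin N × Fin n => β jk.1 jk.2} : Set (Fin N × Fin n → Bool))
            show _ = _
            funext jk
            exact congrFun (congrFun hGβ jk.1) jk.2
        · intro hω
          have hZS : ∀ j, snapCat A (β j) (Z j ω) = x j :=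
            fun j => hω.1 j (Set.mem_univ j)
          have hDβ : ∀ j k, D j k ω = β j k := fun j k => congrFun hω.2 (j, k)
          refine ⟨?_, ?_⟩
          · show F ω = x
            funext j
            have hbj : (fun k => D j k ω) = β j := funext fun k => hDβ j k
            show snapCat A (fun k => D j k ω) (Z j ω) = x j
            rw [hbj]
            exact hZS j
          · show G ω = β
            funext j k
            exact hDβ j k
      have hsZ : MeasurableSet (Set.univ.pi (fun j : Fin N => S (x j) (β j))) :=
        MeasurableSet.univ_pi (fun j => hSmeas _ _)
      have hsD : MeasurableSet ({fun jk : Fin N × Fin n => β jk.1 jk.2} :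
          Set (Fin N × Fin n → Bool)) := measurableSet_singleton _
      rw [hset, hZD.measure_inter_preimage_eq_mul _ _ hsZ hsD]
      have hZpart : P ((fun ω (j : Fin N) => Z j ω) ⁻¹'
          Set.univ.pi (fun j => S (x j) (β j))) = ∏ j, ν (S (x j) (β j)) := by
        have hiInter : (fun ω (j : Fin N) => Z j ω) ⁻¹'
            Set.univ.pi (fun j => S (x j) (β j))
            = ⋂ j ∈ Finset.univ, Z j ⁻¹' (S (x j) (β j)) := by
          ext ω; simp [Set.mem_pi]
        rw [hiInter, hZindep.measure_inter_preimage_eq_mul Finset.univ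
          (fun j _ => hSmeas _ _)]
        exact Finset.prod_congr rfl fun j _ => by
          rw [← Measure.map_apply (hZmeas j) (hSmeas _ _), hlaw j]
      have hDpart : P ((fun ω (jk : Fin N × Fin n) => D jk.1 jk.2 ω) ⁻¹'
          {fun jk => β jk.1 jk.2}) = ∏ j, ∏ k, q (β j k) := by
        have hiInter : (fun ω (jk : Fin N × Fin n) => D jk.1 jk.2 ω) ⁻¹'
            {fun jk => β jk.1 jk.2}
            = ⋂ jk ∈ (Finset.univ : Finset (Fin N × Fin n)),
                (D jk.1 jk.2) ⁻¹' {β jk.1 jk.2} := by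
          ext ω
          simp [funext_iff, Prod.forall]
        rw [hiInter, hDindep.measure_inter_preimage_eq_mul Finset.univ
          (fun jk _ => measurableSet_singleton _)]
        rw [← Fintype.prod_prod_type (f := fun jk : Fin N × Fin n => q (β jk.1 jk.2))]
        exact Finset.prod_congr rfl fun jk _ => hqprob jk.1 jk.2 (β jk.1 jk.2)
      rw [hZpart, hDpart, Finset.prod_mul_distrib]
    rw [Finset.sum_congr rfl fun β _ => hβterm β]
    rw [← Fintype.prod_sum (κ := fun _ : Fin N => Fin n → Bool)
      (f := fun j b => ν (S (x j) b) * ∏ k, q (b k))]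
    exact Finset.prod_congr rfl fun j _ => (hkey (x j)).symm
  rw [hfun, ← Measure.map_map hcntmeas hFmeas, hmain]
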